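/- In the cyclic copying process on {0,1}^L with k ones forming a single interval, the probability that the left endpoint of the 1-interval extends by at least j positions in one round equals 1/j! - 1/(k+j)!, where the round applies a uniformly random permutation order of sequential copy operations around the cycle. -/

import Mathlib

/-- One round of the cyclic copying process: positions are updated sequentially in the
order given by the permutation `σ`, each update overwriting position `σ j` with the
current value of position `σ j + 1` (mod `L`). -/
def cyclicRound {L : ℕ} [NeZero L] (σ : Equiv.Perm (Fin L)) (Γ : Fin L → Bool) :
    Fin L → Bool :=
  (List.finRange L).foldl (fun Δ t => Function.update Δ (σ t) (Δ (σ t + 1))) Γ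

namespace Stmt5
open Fin.NatCast
variable {L : ℕ} [NeZero L]

def ChainP (σ : Equiv.Perm (Fin L)) (p : Fin L) (r : ℕ) : Prop :=
  ∀ m < r - 1, σ.symm (p + ((m+1 : ℕ) : Fin L)) < σ.symm (p + ((m : ℕ) : Fin L))

def RunP (σ : Equiv.Perm (Fin L)) (t : ℕ) (p : Fin L) (r : ℕ) : Prop :=
  (∀ m < r, ((σ.symm (p + ((m : ℕ) : Fin L)) : Fin L) : ℕ) < t) ∧ ChainP σ p r

instance (σ : Equiv.Perm (Fin L)) (t : ℕ) (p : Fin L) : DecidablePred (RunP σ t p) := by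
  intro r; unfold RunP ChainP; infer_instance

instance (σ : Equiv.Perm (Fin L)) (p : Fin L) : DecidablePred (ChainP σ p) := by
  intro r; unfold ChainP; infer_instance

lemma chainP_mono (σ : Equiv.Perm (Fin L)) (p : Fin L) {r r' : ℕ} (h : ChainP σ p r)
    (hle : r' ≤ r) : ChainP σ p r' := fun m hm => h m (by omega)

lemma runP_zero (σ : Equiv.Perm (Fin L)) (t : ℕ) (p : Fin L) : RunP σ t p 0 :=
  ⟨fun m hm => absurd hm (by omega), fun m hm => absurd hm (by omega)⟩

lemma cast_ne (p : Fin L) {c : ℕ} (h0 : 0 < c) (hL : c < L) : p + ((c : ℕ) : Fin L) ≠ p := by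
  intro h
  have h2 : ((c : ℕ) : Fin L) = 0 := add_eq_left.mp h
  rw [Fin.natCast_eq_zero] at h2
  exact absurd (Nat.le_of_dvd h0 h2) (by omega)

lemma symm_val_eq_iff (σ : Equiv.Perm (Fin L)) (x : Fin L) (t : ℕ) (ht : t < L) :
    ((σ.symm x : Fin L) : ℕ) = t ↔ x = σ ⟨t, ht⟩ := by
  constructor
  · intro h
    have : σ.symm x = ⟨t, ht⟩ := Fin.ext h
    rwa [Equiv.symm_apply_eq] at this
  · intro h; subst h; simp

lemma shift_cast (p : Fin L) (m : ℕ) : (p + 1) + ((m : ℕ) : Fin L) = p + ((m+1 : ℕ) : Fin L) := by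
  push_cast; rw [add_assoc, add_comm (1 : Fin L)]

/-- all elements of a run before time `t+1` starting at `p ≠ σ t` are in fact before time `t`. -/
lemma runP_succ_ne (σ : Equiv.Perm (Fin L)) {t : ℕ} (ht : t < L) {p : Fin L}
    (hne : p ≠ σ ⟨t, ht⟩) (r : ℕ) : RunP σ (t+1) p r ↔ RunP σ t p r := by
  constructor
  · rintro ⟨hb, hc⟩
    refine ⟨?_, hc⟩
    intro m hm
    induction m with
    | zero =>
      have h1 := hb 0 hm
      have h2 : ((σ.symm (p + ((0:ℕ) : Fin L)) : Fin L) : ℕ) ≠ t := fun h =>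
        hne (by simpa using (symm_val_eq_iff σ _ t ht).mp h)
      omega
    | succ n ih =>
      have h3 := hc n (by omega)
      have h4 := ih (by omega)
      have h5 := hb (n+1) hm
      have := Fin.lt_iff_val_lt_val.mp h3
      omega
  · rintro ⟨hb, hc⟩
    exact ⟨fun m hm => by have := hb m hm; omega, hc⟩

lemma runP_succ_eq (σ : Equiv.Perm (Fin L)) {t : ℕ} (ht : t < L) {p : Fin L}
    (hp : p = σ ⟨t, ht⟩) {r : ℕ} (hr : r + 1 ≤ L) :
    RunP σ (t+1) p (r+1) ↔ RunP σ t (p+1) r := by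
  have hpt : ((σ.symm p : Fin L) : ℕ) = t := (symm_val_eq_iff σ p t ht).mpr hp
  constructor
  · rintro ⟨hb, hc⟩
    constructor
    · intro m hm
      rw [shift_cast]
      have h1 := hb (m+1) (by omega)
      have h2 : ((σ.symm (p + ((m+1 : ℕ) : Fin L)) : Fin L) : ℕ) ≠ t := fun h =>
        cast_ne p (by omega) (by omega) (((symm_val_eq_iff σ _ t ht).mp h).trans hp.symm)
      omega
    · intro m hm
      rw [shift_cast, shift_cast]
      exact hc (m+1) (by omega)
  · rintro ⟨hb, hc⟩
    constructor
    · intro m hm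
      cases m with
      | zero => simpa using by omega
      | succ n =>
        have := hb n (by omega)
        rw [shift_cast] at this
        omega
    · intro m hm
      cases m with
      | zero =>
        have h0 : ((σ.symm (p + ((1:ℕ) : Fin L)) : Fin L) : ℕ) < t := by
          have := hb 0 (by omega)
          rw [shift_cast] at this
          simpa using this
        have : σ.symm (p + ((1:ℕ) : Fin L)) < σ.symm p := by
          rw [Fin.lt_iff_val_lt_val]; omega
        simpa using this
      | succ n =>
        have := hc n (by omega)
        rw [shift_cast, shift_cast] at this
        exact this

lemma findGreatest_congr {P Q : ℕ → Prop} [DecidablePred P] [DecidablePred Q]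
    (h : ∀ n, P n ↔ Q n) (k : ℕ) : Nat.findGreatest P k = Nat.findGreatest Q k := by
  induction k with
  | zero => rfl
  | succ n ih =>
    rw [Nat.findGreatest_succ, Nat.findGreatest_succ, ih]
    by_cases hq : Q (n+1)
    · rw [if_pos ((h (n+1)).mpr hq), if_pos hq]
    · rw [if_neg (fun hp => hq ((h (n+1)).mp hp)), if_neg hq]

lemma findGreatest_succ_ne (σ : Equiv.Perm (Fin L)) {t : ℕ} (ht : t < L) {p : Fin L}
    (hne : p ≠ σ ⟨t, ht⟩) :
    Nat.findGreatest (RunP σ (t+1) p) L = Nat.findGreatest (RunP σ t p) L :=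
  findGreatest_congr (runP_succ_ne σ ht hne) L

lemma findGreatest_succ_eq (σ : Equiv.Perm (Fin L)) {t : ℕ} (ht : t < L) {p : Fin L}
    (hp : p = σ ⟨t, ht⟩) :
    Nat.findGreatest (RunP σ (t+1) p) L = Nat.findGreatest (RunP σ t (p+1)) L + 1 := by
  set r0 := Nat.findGreatest (RunP σ t (p+1)) L with hr0
  have hr0L : r0 ≤ L := Nat.findGreatest_le L
  have hLpos : 0 < L := Nat.pos_of_ne_zero (NeZero.ne L)
  have hpt : ((σ.symm p : Fin L) : ℕ) = t := (symm_val_eq_iff σ p t ht).mpr hp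
  have hspec := Nat.findGreatest_eq_iff.mp hr0.symm
  have hr0L' : r0 + 1 ≤ L := by
    rcases Nat.lt_or_ge r0 L with h | h
    · omega
    · exfalso
      have hrL : r0 = L := by omega
      have hrun : RunP σ t (p+1) L := by
        have := hspec.2.1 (by omega)
        rwa [hrL] at this
      have hb := hrun.1 (L-1) (by omega)
      rw [shift_cast] at hb
      have : (((L-1)+1 : ℕ) : Fin L) = 0 := by
        rw [show (L-1)+1 = L by omega, Fin.natCast_self]
      rw [this, add_zero] at hb
      omega
  have hP : RunP σ t (p+1) r0 := by
    rcases Nat.eq_zero_or_pos r0 with h | h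
    · rw [h]; exact runP_zero σ t (p+1)
    · exact hspec.2.1 (by omega)
  rw [Nat.findGreatest_eq_iff]
  refine ⟨hr0L', fun _ => (runP_succ_eq σ ht hp hr0L').mpr hP, ?_⟩
  intro n hn hnL hPn
  rcases n with _ | s
  · omega
  · have hs : RunP σ t (p+1) s := (runP_succ_eq σ ht hp (by omega)).mp hPn
    exact Nat.findGreatest_is_greatest (P := RunP σ t (p+1)) (n := L) (k := s)
      (by omega) (by omega) hs

lemma foldl_take (σ : Equiv.Perm (Fin L)) (Γ : Fin L → Bool) :
    ∀ (t : ℕ), t ≤ L → ∀ (p : Fin L),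
    ((List.finRange L).take t).foldl (fun Δ u => Function.update Δ (σ u) (Δ (σ u + 1))) Γ p
      = Γ (p + ((Nat.findGreatest (RunP σ t p) L : ℕ) : Fin L)) := by
  intro t
  induction t with
  | zero =>
    intro _ p
    have h0 : Nat.findGreatest (RunP σ 0 p) L = 0 := by
      rw [Nat.findGreatest_eq_iff]
      refine ⟨by omega, by omega, ?_⟩
      intro n hn hnL hPn
      have := hPn.1 0 (by omega)
      omega
    simp [h0]
  | succ t ih =>
    intro ht p
    have ht' : t < L := by omega
    have htake : (List.finRange L).take (t+1) = (List.finRange L).take t ++ [⟨t, ht'⟩] := by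
      rw [List.take_succ]
      congr
      rw [List.getElem?_eq_getElem (by simpa using ht')]
      simp [List.getElem_finRange, Fin.cast]
    rw [htake, List.foldl_append]
    simp only [List.foldl_cons, List.foldl_nil]
    by_cases hp : p = σ ⟨t, ht'⟩
    · rw [hp, Function.update_self, ih (by omega) (σ ⟨t, ht'⟩ + 1), ← hp]
      rw [findGreatest_succ_eq σ ht' hp]
      rw [shift_cast]
    · rw [Function.update_of_ne hp, ih (by omega) p, findGreatest_succ_ne σ ht' hp]

lemma cyclicRound_eq (σ : Equiv.Perm (Fin L)) (Γ : Fin L → Bool) (p : Fin L) :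
    cyclicRound σ Γ p = Γ (p + ((Nat.findGreatest (ChainP σ p) L : ℕ) : Fin L)) := by
  have h1 : cyclicRound σ Γ p
      = ((List.finRange L).take L).foldl (fun Δ u => Function.update Δ (σ u) (Δ (σ u + 1))) Γ p := by
    rw [show (List.finRange L).take L = List.finRange L by simp]
    rfl
  rw [h1, foldl_take σ Γ L le_rfl p]
  have h2 : Nat.findGreatest (RunP σ L p) L = Nat.findGreatest (ChainP σ p) L :=
    findGreatest_congr (fun r =>
      ⟨fun h => h.2, fun h => ⟨fun m _ => (σ.symm (p + ((m:ℕ):Fin L))).isLt, h⟩⟩) L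
  rw [h2]

/-- Chain condition phrased with natural-number start. -/
def ChainN (σ : Equiv.Perm (Fin L)) (a r : ℕ) : Prop :=
  ∀ m < r - 1, σ.symm (((a+(m+1) : ℕ) : Fin L)) < σ.symm (((a+m : ℕ) : Fin L))

instance (σ : Equiv.Perm (Fin L)) (a : ℕ) : DecidablePred (ChainN σ a) := by
  intro r; unfold ChainN; infer_instance

lemma chainP_natCast (σ : Equiv.Perm (Fin L)) (a r : ℕ) :
    ChainP σ ((a : ℕ) : Fin L) r ↔ ChainN σ a r := by
  unfold ChainP ChainN
  refine forall_congr' fun m => imp_congr Iff.rfl ?_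
  rw [← Nat.cast_add, ← Nat.cast_add]

lemma le_findGreatest_chain (σ : Equiv.Perm (Fin L)) (p : Fin L) {r : ℕ} (hr : r ≤ L) :
    r ≤ Nat.findGreatest (ChainP σ p) L ↔ ChainP σ p r := by
  have hL : 0 < L := Nat.pos_of_ne_zero (NeZero.ne L)
  have h1 : ChainP σ p 1 := fun m hm => absurd hm (by omega)
  constructor
  · intro h
    rcases Nat.eq_zero_or_pos r with h0 | h0
    · subst h0; exact fun m hm => absurd hm (by omega)
    · exact chainP_mono σ p (Nat.findGreatest_spec (by omega) h1) h
  · exact Nat.le_findGreatest hr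

lemma chainN_shift (σ : Equiv.Perm (Fin L)) {a s r r' b : ℕ} (h : ChainN σ a r)
    (hb : a + s = b) (hr : r' + s ≤ r) : ChainN σ b r' := by
  intro m hm
  have h2 := h (s+m) (by omega)
  rw [show a + (s+m) = b + m by omega, show a + (s+m+1) = b + (m+1) by omega] at h2
  exact h2

lemma chainN_glue (σ : Equiv.Perm (Fin L)) {a s r1 r2 b : ℕ} (h1 : ChainN σ a r1)
    (h2 : ChainN σ b r2) (hb : a + s = b) (hs1 : s + 1 ≤ r1) : ChainN σ a (s + r2) := by
  intro m hm
  rcases Nat.lt_or_ge m (r1 - 1) with h | h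
  · exact h1 m h
  · have h3 := h2 (m - s) (by omega)
    rw [show b + (m-s) = a + m by omega, show b + (m-s+1) = a + (m+1) by omega] at h3
    exact h3

section Event
variable {k j : ℕ} (hL : 2 ≤ L) (hk1 : 1 ≤ k) (hk2 : k ≤ L - 1) (hj1 : 1 ≤ j) (hj2 : j ≤ L - k)

include hL hk1 hk2 hj1 hj2 in
lemma cond_iff (σ : Equiv.Perm (Fin L)) {i : ℕ} (hi1 : 1 ≤ i) (hi2 : i ≤ j) (hiL : L - i < L) :
    (cyclicRound σ (fun q => decide (q.val < k)) ⟨L - i, hiL⟩ = true)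
      ↔ (ChainN σ (L-i) i ∧ ¬ ChainN σ (L-i) (i+k)) := by
  have hp : (⟨L - i, hiL⟩ : Fin L) = (((L-i : ℕ)) : Fin L) := by
    apply Fin.ext
    rw [Fin.val_natCast, Nat.mod_eq_of_lt hiL]
  set R := Nat.findGreatest (ChainP σ (((L-i : ℕ)) : Fin L)) L with hR
  have hR1 : 1 ≤ R := Nat.le_findGreatest (by omega) (fun m hm => absurd hm (by omega))
  have hRL : R ≤ L := Nat.findGreatest_le L
  have hval : (((((L-i : ℕ)) : Fin L) + ((R : ℕ) : Fin L) : Fin L) : ℕ) = (L - i + R) % L := by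
    rw [← Nat.cast_add, Fin.val_natCast]
  rw [hp, cyclicRound_eq, decide_eq_true_iff, hval]
  have hlow : i ≤ R ↔ ChainN σ (L-i) i := by
    rw [hR, le_findGreatest_chain σ _ (by omega), chainP_natCast]
  have hhigh : i + k ≤ R ↔ ChainN σ (L-i) (i+k) := by
    rw [hR, le_findGreatest_chain σ _ (by omega), chainP_natCast]
  rw [← hlow, ← hhigh]
  rcases Nat.lt_or_ge R i with h | h
  · rw [Nat.mod_eq_of_lt (by omega)]
    omega
  · rw [Nat.mod_eq_sub_mod (by omega), Nat.mod_eq_of_lt (by omega)]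
    omega

include hL hk1 hk2 hj1 hj2 in
lemma event_iff (σ : Equiv.Perm (Fin L)) :
    (∀ (i : ℕ) (hi : 1 ≤ i) (hij : i ≤ j),
        cyclicRound σ (fun q => decide (q.val < k)) ⟨L - i, Nat.sub_lt (by omega) (by omega)⟩ = true)
      ↔ (ChainN σ (L-j) j ∧ ¬ ChainN σ (L-j) (j+k)) := by
  constructor
  · intro h
    exact (cond_iff hL hk1 hk2 hj1 hj2 σ hj1 le_rfl (by omega)).mp (h j hj1 le_rfl)
  · rintro ⟨hD, hB⟩ i hi1 hi2
    rw [cond_iff hL hk1 hk2 hj1 hj2 σ hi1 hi2 (by omega)]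
    constructor
    · exact chainN_shift σ hD (s := j - i) (by omega) (by omega)
    · intro hbad
      exact hB (by
        have := chainN_glue σ hD hbad (s := j - i) (by omega) (by omega)
        rwa [show j - i + (i+k) = j + k by omega] at this)

end Event

lemma exists_unique_sortPerm {r n : ℕ} (g : Fin r → Fin n) (hg : Function.Injective g) :
    ∃! ρ : Equiv.Perm (Fin r), StrictAnti (g ∘ ρ) := by
  classical
  set s : Finset (Fin n) := Finset.univ.image g with hs
  have hcard : s.card = r := by
    rw [hs, Finset.card_image_of_injective _ hg, Finset.card_univ, Fintype.card_fin]
  have hmem : ∀ m : Fin r, g m ∈ s := fun m => Finset.mem_image_of_mem g (Finset.mem_univ m)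
  have huniq : ∀ ρ : Equiv.Perm (Fin r), StrictAnti (g ∘ ρ) →
      ∀ x : Fin r, g (ρ (Fin.rev x)) = s.orderEmbOfFin hcard x := by
    intro ρ hρ
    have hmono : StrictMono (fun x : Fin r => g (ρ (Fin.rev x))) := by
      intro x y hxy
      exact hρ (Fin.rev_lt_rev.mpr hxy)
    have := Finset.orderEmbOfFin_unique hcard
      (f := fun x : Fin r => g (ρ (Fin.rev x))) (fun x => hmem _) hmono
    exact fun x => congrFun this x
  -- existence
  have hbij : Function.Bijective (fun m : Fin r => (⟨g m, hmem m⟩ : {x // x ∈ s})) := by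
    rw [Fintype.bijective_iff_injective_and_card]
    constructor
    · intro a b hab
      exact hg (congrArg Subtype.val hab)
    · simp [Fintype.card_coe, hcard]
  set e : Fin r ≃ {x // x ∈ s} := Equiv.ofBijective _ hbij with he
  have hge : ∀ x : {x // x ∈ s}, g (e.symm x) = (x : Fin n) := by
    intro x
    have : e (e.symm x) = x := e.apply_symm_apply x
    exact congrArg Subtype.val this
  set iso := s.orderIsoOfFin hcard
  refine ⟨Fin.revPerm.trans (iso.toEquiv.trans e.symm), ?_, ?_⟩
  · intro a b hab
    have ha : (g ∘ (Fin.revPerm.trans (iso.toEquiv.trans e.symm))) a = (iso (Fin.rev a) : Fin n) := by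
      simp [hge]
    have hb : (g ∘ (Fin.revPerm.trans (iso.toEquiv.trans e.symm))) b = (iso (Fin.rev b) : Fin n) := by
      simp [hge]
    rw [ha, hb]
    exact iso.strictMono (Fin.rev_lt_rev.mpr hab)
  · intro ρ hρ
    apply Equiv.ext
    intro m
    have h1 := huniq ρ hρ (Fin.rev m)
    have h2 : g ((Fin.revPerm.trans (iso.toEquiv.trans e.symm)) m) = (iso (Fin.rev m) : Fin n) := by
      simp [hge]
    rw [Fin.rev_rev] at h1
    apply hg
    rw [h1, h2]
    exact (Finset.coe_orderIsoOfFin_apply s hcard (Fin.rev m)).symm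

open Equiv

noncomputable def sortPerm {r n : ℕ} (g : Fin r → Fin n) (hg : Function.Injective g) :
    Equiv.Perm (Fin r) :=
  (exists_unique_sortPerm g hg).exists.choose

lemma sortPerm_spec {r n : ℕ} (g : Fin r → Fin n) (hg : Function.Injective g) :
    StrictAnti (g ∘ sortPerm g hg) :=
  (exists_unique_sortPerm g hg).exists.choose_spec

lemma sortPerm_eq {r n : ℕ} (g : Fin r → Fin n) (hg : Function.Injective g)
    {ρ : Equiv.Perm (Fin r)} (h : StrictAnti (g ∘ ρ)) : ρ = sortPerm g hg :=
  (exists_unique_sortPerm g hg).unique h (sortPerm_spec g hg)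

lemma card_strictAnti_mul {r n : ℕ} (v : Fin r ↪ Fin n) :
    Nat.card {σ : Equiv.Perm (Fin n) // StrictAnti fun m => σ (v m)} * r.factorial
      = n.factorial := by
  classical
  let f : Fin r ≃ Set.range v := Equiv.ofInjective v v.injective
  let ext : Equiv.Perm (Fin r) →* Equiv.Perm (Fin n) := Equiv.Perm.extendDomainHom f
  have hext : ∀ (ρ : Equiv.Perm (Fin r)) (m : Fin r), (ext ρ) (v m) = v (ρ m) := by
    intro ρ m
    have h1 := Equiv.Perm.extendDomain_apply_image ρ f m
    have h2 : ((f m : Set.range v) : Fin n) = v m := rfl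
    have h3 : ((f (ρ m) : Set.range v) : Fin n) = v (ρ m) := rfl
    rw [← h2, ← h3]
    exact h1
  have hinj : ∀ σ : Equiv.Perm (Fin n), Function.Injective (fun m => σ (v m)) :=
    fun σ => σ.injective.comp v.injective
  let E : Equiv.Perm (Fin n) ≃
      {σ : Equiv.Perm (Fin n) // StrictAnti fun m => σ (v m)} × Equiv.Perm (Fin r) :=
  { toFun := fun σ =>
      (⟨σ * ext (sortPerm _ (hinj σ)), by
        intro a b hab
        have h := sortPerm_spec _ (hinj σ) hab
        simpa [Equiv.Perm.mul_apply, hext] using h⟩,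
       sortPerm _ (hinj σ))
    invFun := fun x => x.1.1 * ext x.2⁻¹
    left_inv := by
      intro σ
      simp [map_inv, mul_assoc]
    right_inv := by
      rintro ⟨⟨σ', h'⟩, ρ⟩
      have hg : (fun m => (σ' * ext ρ⁻¹) (v m)) = fun m => σ' (v (ρ⁻¹ m)) := by
        funext m
        rw [Equiv.Perm.mul_apply, hext]
      have hanti : StrictAnti ((fun m => (σ' * ext ρ⁻¹) (v m)) ∘ ρ) := by
        rw [hg]
        intro a b hab
        simpa using h' hab
      have hρ : ρ = sortPerm _ (hinj (σ' * ext ρ⁻¹)) := sortPerm_eq _ _ hanti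
      refine Prod.ext ?_ ?_
      · apply Subtype.ext
        simp only []
        rw [← hρ]
        simp [map_inv, mul_assoc]
      · simp only []
        rw [← hρ] }
  have hcardE := Nat.card_congr E
  rw [Nat.card_prod] at hcardE
  rw [Nat.card_eq_fintype_card (α := Equiv.Perm (Fin n)), Fintype.card_perm,
    Fintype.card_fin] at hcardE
  rw [Nat.card_eq_fintype_card (α := Equiv.Perm (Fin r)), Fintype.card_perm,
    Fintype.card_fin] at hcardE
  exact hcardE.symm


lemma chainN_strictAnti_iff (σ : Equiv.Perm (Fin L)) (a r : ℕ) :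
    ChainN σ a r ↔ StrictAnti (fun m : Fin r => σ.symm (((a + (m : ℕ) : ℕ)) : Fin L)) := by
  constructor
  · intro h
    have key : ∀ n m : ℕ, m < n → n < r →
        σ.symm (((a+n : ℕ)) : Fin L) < σ.symm (((a+m : ℕ)) : Fin L) := by
      intro n
      induction n with
      | zero => omega
      | succ n ih =>
        intro m hmn hnr
        have h1 := h n (by omega)
        rcases Nat.lt_or_ge m n with h2 | h2
        · exact h1.trans (ih m h2 (by omega))
        · have : m = n := by omega
          subst this
          exact h1
    intro x y hxy
    exact key y x hxy y.isLt
  · intro h m hm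
    have := h (a := (⟨m, by omega⟩ : Fin r)) (b := ⟨m+1, by omega⟩) (by simp [Fin.lt_iff_val_lt_val])
    simpa using this

lemma natCast_fin_inj {a : ℕ} {m m' : ℕ} (hm : m < L) (hm' : m' < L)
    (h : (((a+m : ℕ)) : Fin L) = ((a+m' : ℕ) : Fin L)) : m = m' := by
  replace h : (a + m) % L = (a + m') % L := by
    have := congrArg Fin.val h
    rwa [Fin.val_natCast, Fin.val_natCast] at this
  rcases lt_trichotomy m m' with hlt | heq | hlt
  · have h2 := (Nat.modEq_iff_dvd' (by omega)).mp h
    have he : a + m' - (a + m) = m' - m := by omega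
    rw [he] at h2
    have := Nat.le_of_dvd (n := m' - m) (by omega) h2
    omega
  · exact heq
  · have h2 := (Nat.modEq_iff_dvd' (by omega)).mp h.symm
    have he : a + m - (a + m') = m - m' := by omega
    rw [he] at h2
    have := Nat.le_of_dvd (n := m - m') (by omega) h2
    omega


section Main
variable {k j : ℕ}

lemma chainN_mono (σ : Equiv.Perm (Fin L)) (a : ℕ) {r r' : ℕ} (h : ChainN σ a r)
    (hle : r' ≤ r) : ChainN σ a r' := fun m hm => h m (by omega)

lemma card_chainN (a r : ℕ) (hr : r ≤ L) :
    Nat.card {σ : Equiv.Perm (Fin L) // ChainN σ a r} * r.factorial = L.factorial := by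
  classical
  let v : Fin r ↪ Fin L := ⟨fun m => ((a + (m : ℕ) : ℕ) : Fin L), by
    intro m m' h
    exact Fin.ext (natCast_fin_inj (lt_of_lt_of_le m.isLt hr) (lt_of_lt_of_le m'.isLt hr) h)⟩
  have e1 : {σ : Equiv.Perm (Fin L) // ChainN σ a r}
      ≃ {σ : Equiv.Perm (Fin L) // StrictAnti fun m => σ.symm (v m)} :=
    Equiv.subtypeEquivRight fun σ => chainN_strictAnti_iff σ a r
  have e2 : {σ : Equiv.Perm (Fin L) // StrictAnti fun m => σ.symm (v m)}
      ≃ {σ : Equiv.Perm (Fin L) // StrictAnti fun m => σ (v m)} :=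
    (Equiv.inv (Equiv.Perm (Fin L))).subtypeEquiv fun σ => Iff.rfl
  rw [Nat.card_congr (e1.trans e2)]
  exact card_strictAnti_mul v

lemma main (L k j : ℕ) [NeZero L] (hL : 2 ≤ L) (hk1 : 1 ≤ k) (hk2 : k ≤ L - 1)
    (hj1 : 1 ≤ j) (hj2 : j ≤ L - k) :
    (Nat.card {σ : Equiv.Perm (Fin L) //
        ∀ (i : ℕ) (hi : 1 ≤ i) (hij : i ≤ j),
          cyclicRound σ (fun q => decide (q.val < k)) ⟨L - i, Nat.sub_lt (by omega) (by omega)⟩ = true} : ℚ)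
      / (Nat.factorial L : ℚ)
    = 1 / Nat.factorial j - 1 / Nat.factorial (k + j) := by
  classical
  have hcongr : Nat.card {σ : Equiv.Perm (Fin L) //
        ∀ (i : ℕ) (hi : 1 ≤ i) (hij : i ≤ j),
          cyclicRound σ (fun q => decide (q.val < k)) ⟨L - i, by omega⟩ = true}
      = Nat.card {σ : Equiv.Perm (Fin L) //
          ChainN σ (L-j) j ∧ ¬ ChainN σ (L-j) (j+k)} :=
    Nat.card_congr (Equiv.subtypeEquivRight fun σ => event_iff hL hk1 hk2 hj1 hj2 σ)
  rw [hcongr]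
  set A := Nat.card {σ : Equiv.Perm (Fin L) // ChainN σ (L-j) j} with hAdef
  set B := Nat.card {σ : Equiv.Perm (Fin L) // ChainN σ (L-j) (j+k)} with hBdef
  have hA : A * j.factorial = L.factorial := card_chainN _ _ (by omega)
  have hB : B * (j+k).factorial = L.factorial := card_chainN _ _ (by omega)
  have hsubset : (Finset.univ.filter (fun σ : Equiv.Perm (Fin L) => ChainN σ (L-j) (j+k)))
      ⊆ (Finset.univ.filter (fun σ : Equiv.Perm (Fin L) => ChainN σ (L-j) j)) := by
    intro σ hσ
    rw [Finset.mem_filter] at hσ ⊢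
    exact ⟨hσ.1, chainN_mono σ _ hσ.2 (by omega)⟩
  have hcards : ∀ (P : Equiv.Perm (Fin L) → Prop) [DecidablePred P],
      Nat.card {σ : Equiv.Perm (Fin L) // P σ} = (Finset.univ.filter P).card := by
    intro P _
    rw [Nat.card_eq_fintype_card, Fintype.card_subtype]
  have hsdiff : Nat.card {σ : Equiv.Perm (Fin L) //
      ChainN σ (L-j) j ∧ ¬ ChainN σ (L-j) (j+k)} = A - B := by
    rw [hcards, hAdef, hBdef, hcards, hcards]
    rw [← Finset.card_sdiff_of_subset hsubset]
    congr 1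
    ext σ
    simp [Finset.mem_sdiff, Finset.mem_filter]
  have hBA : B ≤ A := by
    rw [hAdef, hBdef, hcards, hcards]
    exact Finset.card_le_card hsubset
  rw [hsdiff]
  have hfL : ((L.factorial : ℕ) : ℚ) ≠ 0 := by
    exact_mod_cast L.factorial_ne_zero
  have hfj : ((j.factorial : ℕ) : ℚ) ≠ 0 := by
    exact_mod_cast j.factorial_ne_zero
  have hfjk : (((j+k).factorial : ℕ) : ℚ) ≠ 0 := by
    exact_mod_cast (j+k).factorial_ne_zero
  have e1 : (A : ℚ) / (L.factorial : ℚ) = 1 / (j.factorial : ℚ) := by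
    rw [div_eq_div_iff hfL hfj]
    have : ((A * j.factorial : ℕ) : ℚ) = ((L.factorial : ℕ) : ℚ) := congrArg (fun n : ℕ => (n : ℚ)) hA
    push_cast at this
    linarith
  have e2 : (B : ℚ) / (L.factorial : ℚ) = 1 / ((j+k).factorial : ℚ) := by
    rw [div_eq_div_iff hfL hfjk]
    have : ((B * (j+k).factorial : ℕ) : ℚ) = ((L.factorial : ℕ) : ℚ) := congrArg (fun n : ℕ => (n : ℚ)) hB
    push_cast at this
    linarith
  rw [Nat.cast_sub hBA, sub_div, e1, e2, Nat.add_comm k j]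

end Main

end Stmt5

/-- In the cyclic copying process started from an interval of `k` ones (positions
`0, …, k-1`) and `L - k` zeros, the probability (over the uniformly random permutation
order of one round) that the left endpoint of the 1-interval extends by at least `j`
positions (i.e. positions `L - 1, …, L - j` become `1`) equals `1/j! - 1/(k+j)!`. -/
theorem stmt5 (L k j : ℕ) [NeZero L] (hL : 2 ≤ L) (hk1 : 1 ≤ k) (hk2 : k ≤ L - 1)
    (hj1 : 1 ≤ j) (hj2 : j ≤ L - k) :
    (Nat.card {σ : Equiv.Perm (Fin L) //
        ∀ (i : ℕ) (hi : 1 ≤ i) (hij : i ≤ j),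
          cyclicRound σ (fun q => decide (q.val < k)) ⟨L - i, by omega⟩ = true} : ℚ)
      / (Nat.factorial L : ℚ)
    = 1 / Nat.factorial j - 1 / Nat.factorial (k + j) := by
  classical
  exact Stmt5.main L k j hL hk1 hk2 hj1 hj2
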